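/- Let p and h_t be probability distributions on a finite set 𝒳, q : 𝒳 → [0,1], η ∈ (0,1), s ∈ {-1,1}, and define the multiplicative-weights update h_{t+1}(x) = h_t(x)·exp(s·η·q(x)) / Σ_w h_t(w)·exp(s·η·q(w)). Then D(p‖h_{t+1}) - D(p‖h_t) ≤ -s·η·(q·p - q·h_t) + η²/2, where D denotes relative entropy and q·f = Σ_x q(x)·f(x). -/
import Mathlib
open Real Finset

lemma exp_le_quad {a : ℝ} (ha : a ≤ 0) : Real.exp a ≤ 1 + a + a ^ 2 / 2 := by
  have h1 : 1 + (-a) + (-a) ^ 2 / 2 ≤ Real.exp (-a) := Real.quadratic_le_exp_of_nonneg (by linarith)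
  have h2 : Real.exp (-a) = (Real.exp a)⁻¹ := Real.exp_neg a
  have h3 : 0 < Real.exp a := Real.exp_pos a
  rw [h2, le_inv_comm₀ (by nlinarith) h3] at h1
  calc Real.exp a ≤ (1 + -a + (-a)^2/2)⁻¹ := h1
    _ ≤ 1 + a + a^2/2 := by
        rw [inv_le_iff_one_le_mul₀ (by nlinarith)]
        nlinarith [sq_nonneg (a^2)]

theorem stmt_4 {𝒳 : Type*} [Fintype 𝒳] [Nonempty 𝒳]
    (p h : 𝒳 → ℝ) (hp : ∀ x, 0 ≤ p x) (hpsum : ∑ x, p x = 1)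
    (hh : ∀ x, 0 < h x) (hhsum : ∑ x, h x = 1)
    (q : 𝒳 → ℝ) (hq : ∀ x, q x ∈ Set.Icc (0:ℝ) 1)
    (η : ℝ) (hη : η ∈ Set.Ioo (0:ℝ) 1) (s : ℝ) (hs : s = -1 ∨ s = 1)
    (h' : 𝒳 → ℝ)
    (hupd : ∀ x, h' x = h x * Real.exp (s * η * q x) / ∑ w, h w * Real.exp (s * η * q w)) :
    (∑ x, p x * Real.log (p x / h' x)) - (∑ x, p x * Real.log (p x / h x)) ≤
      -(s * η * ((∑ x, q x * p x) - (∑ x, q x * h x))) + η^2 / 2 := by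
  obtain ⟨hη0, hη1⟩ := hη
  set Z : ℝ := ∑ w, h w * Real.exp (s * η * q w) with hZ
  have hZpos : 0 < Z := Finset.sum_pos (fun w _ => mul_pos (hh w) (Real.exp_pos _)) univ_nonempty
  -- termwise rewrite of the difference
  have hterm : ∀ x, p x * Real.log (p x / h' x) - p x * Real.log (p x / h x)
      = p x * (Real.log Z - s * η * q x) := by
    intro x
    rcases eq_or_lt_of_le (hp x) with hx | hx
    · simp [← hx]
    · have hhx := hh x
      have hex : (0:ℝ) < Real.exp (s * η * q x) := Real.exp_pos _
      rw [hupd x, Real.log_div hx.ne' (by positivity), Real.log_div hx.ne' hhx.ne',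
        Real.log_div (by positivity) hZpos.ne', Real.log_mul hhx.ne' hex.ne', Real.log_exp]
      ring
  have hsum1 : (∑ x, p x * Real.log (p x / h' x)) - (∑ x, p x * Real.log (p x / h x))
      = Real.log Z - s * η * ∑ x, q x * p x := by
    rw [← Finset.sum_sub_distrib]
    simp_rw [hterm, mul_sub, Finset.sum_sub_distrib, ← Finset.sum_mul, hpsum, one_mul,
      Finset.mul_sum]
    congr 1
    apply Finset.sum_congr rfl
    intro x _
    ring
  -- bound log Z
  set c : ℝ := max (s * η) 0 with hc
  have hadef : ∀ x, s * η * q x - c ≤ 0 ∧ -η ≤ s * η * q x - c := by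
    intro x
    obtain ⟨hq0, hq1⟩ := hq x
    rcases hs with rfl | rfl
    · have hc0 : c = 0 := max_eq_right (by nlinarith)
      rw [hc0]; constructor <;> nlinarith
    · have hc0 : c = 1 * η := max_eq_left (by nlinarith)
      rw [hc0]; constructor <;> nlinarith
  have hW : Real.log Z ≤ s * η * (∑ x, q x * h x) + η ^ 2 / 2 := by
    set W : ℝ := ∑ w, h w * Real.exp (s * η * q w - c) with hWdef
    have hWpos : 0 < W := Finset.sum_pos (fun w _ => mul_pos (hh w) (Real.exp_pos _)) univ_nonempty
    have hZW : Z = Real.exp c * W := by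
      rw [hWdef, Finset.mul_sum]
      apply Finset.sum_congr rfl
      intro w _
      rw [Real.exp_sub]
      have := (Real.exp_pos c).ne'
      field_simp
    have hWle : W ≤ 1 + (s * η * (∑ x, q x * h x) - c) + η ^ 2 / 2 := by
      have : W ≤ ∑ w, h w * (1 + (s * η * q w - c) + η ^ 2 / 2) := by
        apply Finset.sum_le_sum
        intro w _
        apply mul_le_mul_of_nonneg_left _ (hh w).le
        obtain ⟨ha1, ha2⟩ := hadef w
        calc Real.exp (s * η * q w - c) ≤ 1 + (s * η * q w - c) + (s * η * q w - c) ^ 2 / 2 :=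
              exp_le_quad ha1
          _ ≤ 1 + (s * η * q w - c) + η ^ 2 / 2 := by nlinarith
      refine this.trans (le_of_eq ?_)
      have e1 : ∑ w, h w * (1 + (s * η * q w - c) + η ^ 2 / 2)
          = (∑ w, h w) * (1 - c + η ^ 2 / 2) + s * η * ∑ w, q w * h w := by
        rw [Finset.sum_mul, Finset.mul_sum, ← Finset.sum_add_distrib]
        exact Finset.sum_congr rfl fun w _ => by ring
      rw [e1, hhsum]; ring
    have hlogW : Real.log W ≤ W - 1 := Real.log_le_sub_one_of_pos hWpos
    rw [hZW, Real.log_mul (Real.exp_pos c).ne' hWpos.ne', Real.log_exp]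
    linarith
  rw [hsum1]
  linarith
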